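/- Let μ be a purely atomic probability measure on a standard Borel space Ω, i.e., μ(S) = 1 for some countable set S. Then every concept class 𝒞 on Ω (every family of measurable subsets of Ω) is Glivenko–Cantelli with respect to μ. -/

import Mathlib

open MeasureTheory Filter
open scoped ENNReal ProbabilityTheory
open ProbabilityTheory

/-- The `n`-fold product (i.i.d.) measure on `Fin n → Ω`. -/
noncomputable def prodMeas {Ω : Type*} [MeasurableSpace Ω] (μ : Measure Ω) (n : ℕ) :
    Measure (Fin n → Ω) := Measure.pi fun _ => μ

/-- Empirical frequency of a concept `C` on a sample `x` of size `n`. -/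
noncomputable def empFreq {Ω : Type*} (C : Set Ω) {n : ℕ} (x : Fin n → Ω) : ℝ :=
  (Finset.univ.filter fun i => @decide (x i ∈ C) (Classical.propDecidable _) = true).card / n

/-- The concept class `𝒞` is Glivenko–Cantelli with respect to `μ`. -/
def IsGC {Ω : Type*} [MeasurableSpace Ω] (μ : Measure Ω) (𝒞 : Set (Set Ω)) : Prop :=
  ∀ ε : ℝ, 0 < ε →
    Tendsto (fun n => prodMeas μ n
      {x | ε ≤ ⨆ C ∈ 𝒞, |(μ C).toReal - empFreq C x|}) atTop (nhds 0)

section helpers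
variable {Ω : Type*} [MeasurableSpace Ω] {μ : Measure Ω} [IsProbabilityMeasure μ] {n : ℕ}

instance (n : ℕ) : IsProbabilityMeasure (prodMeas μ n) := by
  unfold prodMeas; infer_instance

lemma empFreq_eq (C : Set Ω) (x : Fin n → Ω) :
    empFreq C x = (∑ i, C.indicator (fun _ => (1:ℝ)) (x i)) / n := by
  classical
  unfold empFreq
  rw [Finset.card_filter]
  push_cast
  congr 1
  refine Finset.sum_congr rfl fun i _ => ?_
  by_cases h : x i ∈ C <;> simp [h, Set.indicator_apply]

lemma prodMeas_eval_preimage (i : Fin n) {s : Set Ω} (hs : MeasurableSet s) :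
    prodMeas μ n ((fun x => x i) ⁻¹' s) = μ s := by
  have h : (fun x : Fin n → Ω => x i) ⁻¹' s
      = Set.pi Set.univ (fun j => if j = i then s else Set.univ) := by
    ext x
    simp only [Set.mem_preimage, Set.mem_pi, Set.mem_univ, true_implies]
    constructor
    · intro h j; by_cases hj : j = i <;> simp [hj, h]
    · intro h; have := h i; simpa using this
  rw [prodMeas, h, Measure.pi_pi]
  simp [apply_ite μ]

lemma prodMeas_map_eval (i : Fin n) :
    (prodMeas μ n).map (fun x => x i) = μ := by
  refine Measure.ext fun s hs => ?_
  rw [Measure.map_apply (measurable_pi_apply i) hs]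
  exact prodMeas_eval_preimage i hs

lemma iIndep_evals : iIndepFun
    (fun i (x : Fin n → Ω) => x i) (prodMeas μ n) := by
  classical
  rw [ProbabilityTheory.iIndepFun_iff_measure_inter_preimage_eq_mul]
  intro S sets hsets
  have h : (⋂ i ∈ S, (fun x : Fin n → Ω => x i) ⁻¹' sets i)
      = Set.pi Set.univ (fun j => if j ∈ S then sets j else Set.univ) := by
    ext x
    simp only [Set.mem_iInter, Set.mem_preimage, Set.mem_pi, Set.mem_univ, true_implies]
    constructor
    · intro h j; by_cases hj : j ∈ S <;> simp [hj, h]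
    · intro h j hj; have := h j; simpa [hj] using this
  rw [show prodMeas μ n = Measure.pi fun _ => μ from rfl, h, Measure.pi_pi]
  have heq : ∀ i ∈ S, (Measure.pi fun _ : Fin n => μ) ((fun x : Fin n → Ω => x i) ⁻¹' sets i)
      = μ (sets i) := fun i hi => prodMeas_eval_preimage i (hsets i hi)
  rw [Finset.prod_congr rfl heq]
  calc (∏ j, μ (if j ∈ S then sets j else Set.univ))
      = ∏ j, (if j ∈ S then μ (sets j) else 1) := by
        refine Finset.prod_congr rfl fun j _ => ?_
        by_cases hj : j ∈ S <;> simp [hj]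
    _ = ∏ j ∈ S, μ (sets j) := by
        rw [Finset.prod_ite_mem, Finset.univ_inter]


private noncomputable def XV {Ω : Type*} (A : Set Ω) {n : ℕ} (i : Fin n) :
    (Fin n → Ω) → ℝ :=
  fun x => A.indicator (fun _ => (1:ℝ)) (x i)

lemma XV_meas {A : Set Ω} (hA : MeasurableSet A) (i : Fin n) : Measurable (XV A i) :=
  (measurable_const.indicator hA).comp (measurable_pi_apply i)

lemma XV_memLp {A : Set Ω} (hA : MeasurableSet A) (i : Fin n) :
    MemLp (XV A i) 2 (prodMeas μ n) := by
  refine MemLp.of_bound ((XV_meas hA i).aestronglyMeasurable) 1 ?_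
  refine Eventually.of_forall fun x => ?_
  simp only [XV, Real.norm_eq_abs]
  by_cases h : x i ∈ A <;> simp [h]

lemma XV_integral {A : Set Ω} (hA : MeasurableSet A) (i : Fin n) :
    ∫ x, XV A i x ∂(prodMeas μ n) = (μ A).toReal := by
  have hmap := prodMeas_map_eval (μ := μ) i
  have : ∫ x, XV A i x ∂(prodMeas μ n)
      = ∫ ω, A.indicator (fun _ => (1:ℝ)) ω ∂((prodMeas μ n).map (fun x => x i)) := by
    rw [integral_map (measurable_pi_apply i).aemeasurable]
    · rfl
    · rw [hmap]
      exact (measurable_const.indicator hA).aestronglyMeasurable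
  rw [this, hmap]
  exact integral_indicator_one hA

lemma XV_variance_le {A : Set Ω} (hA : MeasurableSet A) (i : Fin n) :
    variance (XV A i) (prodMeas μ n) ≤ 1 := by
  refine (variance_le_expectation_sq (XV_meas hA i).aestronglyMeasurable).trans ?_
  have h1 : ∫ x, (1:ℝ) ∂(prodMeas μ n) = 1 := by simp
  rw [← h1]
  refine integral_mono ((XV_memLp hA i).integrable_sq) (integrable_const 1) fun x => ?_
  simp only [Pi.pow_apply, XV]
  by_cases h : x i ∈ A <;> simp [h]

lemma empFreq_eq_smul_sum (A : Set Ω) :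
    (empFreq A : (Fin n → Ω) → ℝ) = (n : ℝ)⁻¹ • ∑ i, XV A i := by
  funext x
  rw [empFreq_eq]
  simp [XV, div_eq_inv_mul, Finset.sum_apply]

lemma empFreq_integral {A : Set Ω} (hA : MeasurableSet A) (hn : 0 < n) :
    ∫ x, empFreq A x ∂(prodMeas μ n) = (μ A).toReal := by
  have hx : ∀ x : Fin n → Ω, empFreq A x = (n:ℝ)⁻¹ * ∑ i, XV A i x := by
    intro x
    rw [congrFun (empFreq_eq_smul_sum A) x]
    simp
  simp_rw [hx]
  rw [MeasureTheory.integral_const_mul,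
    integral_finset_sum _ fun i _ => (XV_memLp hA i).integrable one_le_two,
    Finset.sum_congr rfl fun i (_ : i ∈ Finset.univ) => XV_integral hA i]
  have hn' : (0:ℝ) < (n:ℝ) := by exact_mod_cast hn
  rw [Finset.sum_const, Finset.card_univ, Fintype.card_fin, nsmul_eq_mul,
    ← mul_assoc, inv_mul_cancel₀ hn'.ne', one_mul]

lemma empFreq_memLp {A : Set Ω} (hA : MeasurableSet A) :
    MemLp (empFreq A) 2 (prodMeas μ n) := by
  rw [empFreq_eq_smul_sum A]
  exact (memLp_finset_sum' _ fun i _ => XV_memLp hA i).const_smul _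

lemma empFreq_variance_le {A : Set Ω} (hA : MeasurableSet A) (hn : 0 < n) :
    variance (empFreq A) (prodMeas μ n) ≤ 1 / n := by
  rw [empFreq_eq_smul_sum A, variance_smul]
  have hiid : iIndepFun
      (fun i => XV A i) (prodMeas μ n) :=
    iIndep_evals.comp (fun _ => A.indicator fun _ => (1:ℝ))
      (fun _ => measurable_const.indicator hA)
  rw [IndepFun.variance_sum (fun i _ => XV_memLp hA i)
    (fun i _ j _ hij => hiid.indepFun hij)]
  have hsum : ∑ i : Fin n, variance (XV A i) (prodMeas μ n) ≤ (n:ℝ) := by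
    calc ∑ i : Fin n, variance (XV A i) (prodMeas μ n) ≤ ∑ _i : Fin n, (1:ℝ) :=
          Finset.sum_le_sum fun i _ => XV_variance_le hA i
      _ = (n:ℝ) := by simp
  have hn' : (0:ℝ) < (n:ℝ) := by exact_mod_cast hn
  have h2 : ((n:ℝ)⁻¹)^2 * ∑ i : Fin n, variance (XV A i) (prodMeas μ n)
      ≤ ((n:ℝ)⁻¹)^2 * (n:ℝ) := mul_le_mul_of_nonneg_left hsum (by positivity)
  refine h2.trans (le_of_eq ?_)
  field_simp

lemma concentration {A : Set Ω} (hA : MeasurableSet A) (hn : 0 < n) {δ : ℝ} (hδ : 0 < δ) :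
    prodMeas μ n {x | δ ≤ |(μ A).toReal - empFreq A x|}
      ≤ ENNReal.ofReal (1 / (n * δ^2)) := by
  have h1 : {x : Fin n → Ω | δ ≤ |(μ A).toReal - empFreq A x|}
      = {x | δ ≤ |empFreq A x - (prodMeas μ n)[empFreq A]|} := by
    ext x
    simp only [Set.mem_setOf_eq]
    rw [empFreq_integral hA hn, abs_sub_comm]
  rw [h1]
  refine (meas_ge_le_variance_div_sq (empFreq_memLp hA) hδ).trans ?_
  refine ENNReal.ofReal_le_ofReal ?_
  rw [div_le_div_iff₀ (by positivity) (by positivity)]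
  have := empFreq_variance_le (μ := μ) hA hn
  have hn' : (0:ℝ) < n := by exact_mod_cast hn
  calc variance (empFreq A) (prodMeas μ n) * (n * δ^2) ≤ (1/n) * (n * δ^2) := by
        refine mul_le_mul_of_nonneg_right this (by positivity)
    _ = 1 * δ^2 := by field_simp

lemma empFreq_nonneg (C : Set Ω) (x : Fin n → Ω) : 0 ≤ empFreq C x := by
  unfold empFreq; positivity

lemma empFreq_mono {C D : Set Ω} (h : C ⊆ D) (x : Fin n → Ω) :
    empFreq C x ≤ empFreq D x := by
  rw [empFreq_eq, empFreq_eq]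
  have hsum : (∑ i, C.indicator (fun _ => (1:ℝ)) (x i))
      ≤ ∑ i, D.indicator (fun _ => (1:ℝ)) (x i) :=
    Finset.sum_le_sum fun i _ =>
      Set.indicator_le_indicator_of_subset h (fun _ => zero_le_one) (x i)
  have hinv : (0:ℝ) ≤ ((n:ℝ))⁻¹ := by positivity
  simpa [div_eq_mul_inv] using mul_le_mul_of_nonneg_right hsum hinv

lemma empFreq_inter_add_diff (C F : Set Ω) (x : Fin n → Ω) :
    empFreq (C ∩ F) x + empFreq (C \ F) x = empFreq C x := by
  simp only [empFreq_eq, ← add_div]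
  congr 1
  rw [← Finset.sum_add_distrib]
  refine Finset.sum_congr rfl fun i _ => ?_
  by_cases h1 : x i ∈ C <;> by_cases h2 : x i ∈ F <;>
    simp [Set.indicator_apply, h1, h2]

lemma empFreq_univ (hn : 0 < n) (x : Fin n → Ω) :
    empFreq (Set.univ : Set Ω) x = 1 := by
  rw [empFreq_eq]
  simp only [Set.indicator_univ, Finset.sum_const, Finset.card_univ, Fintype.card_fin,
    nsmul_eq_mul, mul_one]
  exact div_self (by exact_mod_cast hn.ne')

lemma empFreq_finset (G : Finset Ω) (x : Fin n → Ω) :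
    empFreq (↑G : Set Ω) x = ∑ ω ∈ G, empFreq {ω} x := by
  classical
  simp only [empFreq_eq, ← Finset.sum_div]
  congr 1
  rw [Finset.sum_comm]
  refine Finset.sum_congr rfl fun i _ => ?_
  simp only [Set.indicator_apply, Set.mem_singleton_iff, Finset.mem_coe]
  rw [Finset.sum_ite_eq G (x i) (fun _ => (1:ℝ))]

lemma measure_toReal_finset [MeasurableSingletonClass Ω] (G : Finset Ω) :
    (μ (↑G : Set Ω)).toReal = ∑ ω ∈ G, (μ {ω}).toReal := by
  have h : μ (↑G : Set Ω) = ∑ ω ∈ G, μ {ω} := by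
    rw [show (↑G : Set Ω) = ⋃ ω ∈ G, {ω} from by ext a; simp]
    exact measure_biUnion_finset
      (fun a _ b _ hab => Set.disjoint_singleton.mpr hab)
      (fun a _ => measurableSet_singleton a)
  rw [h, ENNReal.toReal_sum fun a _ => measure_ne_top μ _]

lemma measure_compl_toReal {s : Set Ω} (hs : MeasurableSet s) :
    (μ sᶜ).toReal = 1 - (μ s).toReal := by
  rw [measure_compl hs (measure_ne_top μ s), measure_univ,
    ENNReal.toReal_sub_of_le prob_le_one ENNReal.one_ne_top, ENNReal.toReal_one]

lemma key_bound [MeasurableSingletonClass Ω] (hn : 0 < n) (F : Finset Ω) (x : Fin n → Ω)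
    {δ η : ℝ}
    (hδ : ∀ ω ∈ F, |(μ {ω}).toReal - empFreq {ω} x| ≤ δ)
    (hη : (μ ((↑F : Set Ω)ᶜ)).toReal ≤ η) (C : Set Ω) :
    |(μ C).toReal - empFreq C x| ≤ 2 * ((F.card : ℝ) * δ + η) := by
  classical
  set Ssum := ∑ ω ∈ F, |(μ {ω}).toReal - empFreq {ω} x| with hSsum
  have hSsumnonneg : 0 ≤ Ssum := Finset.sum_nonneg fun _ _ => abs_nonneg _
  have hSb : Ssum ≤ (F.card : ℝ) * δ := by
    calc Ssum ≤ ∑ _ω ∈ F, δ := Finset.sum_le_sum hδ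
      _ = (F.card : ℝ) * δ := by rw [Finset.sum_const, nsmul_eq_mul]
  have hFmeas : MeasurableSet (↑F : Set Ω) := F.measurableSet
  -- Step A
  have stepA : ∀ D : Set Ω,
      |(μ (D ∩ ↑F)).toReal - empFreq (D ∩ ↑F) x| ≤ Ssum := by
    intro D
    have hset : D ∩ (↑F : Set Ω) = ↑(F.filter (· ∈ D)) := by
      ext ω; simp [and_comm]
    rw [hset, measure_toReal_finset, empFreq_finset, ← Finset.sum_sub_distrib]
    refine (Finset.abs_sum_le_sum_abs _ _).trans ?_
    exact Finset.sum_le_sum_of_subset_of_nonneg (Finset.filter_subset _ _)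
      (fun _ _ _ => abs_nonneg _)
  -- decomposition of μ C
  have hμdec : (μ C).toReal = (μ (C ∩ ↑F)).toReal + (μ (C \ ↑F)).toReal := by
    rw [← ENNReal.toReal_add (measure_ne_top μ _) (measure_ne_top μ _),
      measure_inter_add_diff C hFmeas]
  have hqdec : empFreq C x = empFreq (C ∩ ↑F) x + empFreq (C \ ↑F) x :=
    (empFreq_inter_add_diff C (↑F) x).symm
  -- bounds on the remainders
  have hμrem : (μ (C \ ↑F)).toReal ≤ η := by
    refine le_trans ?_ hη
    exact ENNReal.toReal_mono (measure_ne_top μ _)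
      (measure_mono (Set.diff_subset_compl C ↑F))
  have hμrem0 : 0 ≤ (μ (C \ ↑F)).toReal := ENNReal.toReal_nonneg
  have hqrem0 : 0 ≤ empFreq (C \ ↑F) x := empFreq_nonneg _ _
  -- empirical mass of the complement of F
  have hqF : empFreq (↑F : Set Ω) x + empFreq ((↑F : Set Ω)ᶜ) x = 1 := by
    have := empFreq_inter_add_diff (Set.univ : Set Ω) (↑F) x
    rw [Set.univ_inter, Set.diff_eq, Set.univ_inter] at this
    rw [this, empFreq_univ hn]
  have hF_close : |(μ (↑F : Set Ω)).toReal - empFreq (↑F : Set Ω) x| ≤ Ssum := by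
    have := stepA (↑F)
    rwa [Set.inter_self] at this
  have hμF : (μ ((↑F : Set Ω)ᶜ)).toReal = 1 - (μ (↑F : Set Ω)).toReal :=
    measure_compl_toReal hFmeas
  have hqrem : empFreq (C \ ↑F) x ≤ η + Ssum := by
    refine (empFreq_mono (Set.diff_subset_compl C ↑F) x).trans ?_
    have h1 := abs_le.mp hF_close
    have h2 : empFreq ((↑F : Set Ω)ᶜ) x = 1 - empFreq (↑F : Set Ω) x := by linarith
    rw [h2]
    have : 1 - (μ (↑F : Set Ω)).toReal ≤ η := by rw [← hμF]; exact hη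
    linarith [h1.1, h1.2]
  -- conclude
  have hA := abs_le.mp (stepA C)
  rw [hμdec, hqdec, abs_le]
  constructor <;> nlinarith [hA.1, hA.2, hSb, hμrem, hqrem, hμrem0, hqrem0]

end helpers


/-- if `μ` is a purely atomic probability measure on a standard Borel
space `Ω` (i.e. `μ S = 1` for some countable `S`), then every concept class on `Ω` is
Glivenko–Cantelli with respect to `μ`. -/
theorem stmt4 {Ω : Type*} [MeasurableSpace Ω] [StandardBorelSpace Ω]
    (μ : Measure Ω) [IsProbabilityMeasure μ]
    (S : Set Ω) (hS : S.Countable) (hμS : μ S = 1)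
    (𝒞 : Set (Set Ω)) (h𝒞 : ∀ C ∈ 𝒞, MeasurableSet C) :
    IsGC μ 𝒞 := by
  letI := upgradeStandardBorel Ω
  haveI : MeasurableSingletonClass Ω := inferInstance
  intro ε hε
  -- find a finite set of atoms carrying most of the mass
  have hSne : S.Nonempty := by
    rcases S.eq_empty_or_nonempty with h | h
    · exfalso; rw [h, measure_empty] at hμS; exact zero_ne_one hμS
    · exact h
  obtain ⟨e, hrange⟩ := hS.exists_eq_range hSne
  classical
  set T : ℕ → Finset Ω := fun m => (Finset.range m).image e with hT
  have hmono : Monotone fun m => (↑(T m) : Set Ω) := by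
    intro a b hab ω hω
    simp only [hT, Finset.coe_image, Set.mem_image, Finset.mem_coe,
      Finset.mem_range] at hω ⊢
    obtain ⟨k, hk, hke⟩ := hω
    exact ⟨k, lt_of_lt_of_le hk hab, hke⟩
  have hunion : (⋃ m, (↑(T m) : Set Ω)) = Set.range e := by
    ext ω
    simp only [Set.mem_iUnion, hT, Finset.coe_image, Set.mem_image,
      Finset.mem_coe, Finset.mem_range, Set.mem_range]
    constructor
    · rintro ⟨m, k, _, hk⟩; exact ⟨k, hk⟩
    · rintro ⟨k, hk⟩; exact ⟨k + 1, k, Nat.lt_succ_self k, hk⟩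
  have htend : Tendsto (fun m => μ (↑(T m) : Set Ω)) atTop (nhds 1) := by
    have h1 : μ (⋃ m, (↑(T m) : Set Ω)) = 1 := by
      rw [hunion]
      refine le_antisymm prob_le_one ?_
      rw [← hμS]
      exact measure_mono (hrange ▸ subset_rfl)
    have := tendsto_measure_iUnion_atTop (μ := μ) hmono
    rwa [h1] at this
  have htendR : Tendsto (fun m => (μ (↑(T m) : Set Ω)).toReal) atTop (nhds 1) := by
    have h := (ENNReal.tendsto_toReal ENNReal.one_ne_top).comp htend
    exact h
  have hev : ∀ᶠ m in atTop, 1 - ε / 8 < (μ (↑(T m) : Set Ω)).toReal :=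
    htendR.eventually (eventually_gt_nhds (by linarith))
  obtain ⟨m, hm⟩ := hev.exists
  set F : Finset Ω := T m with hF
  set k : ℕ := F.card with hk
  set δ : ℝ := ε / (8 * ((k : ℝ) + 1)) with hδdef
  have hδpos : 0 < δ := by rw [hδdef]; positivity
  have hη : (μ ((↑F : Set Ω)ᶜ)).toReal ≤ ε / 8 := by
    rw [measure_compl_toReal F.measurableSet]
    linarith
  have hbound : 2 * ((k : ℝ) * δ + ε / 8) ≤ ε / 2 := by
    have hkd : (k : ℝ) * δ ≤ ε / 8 := by
      rw [hδdef, mul_div_assoc']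
      rw [div_le_div_iff₀ (by positivity) (by norm_num)]
      nlinarith [hε.le, Nat.cast_nonneg (α := ℝ) k]
    linarith
  -- squeeze
  have hconc : ∀ n : ℕ, 1 ≤ n →
      prodMeas μ n {x | ε ≤ ⨆ C ∈ 𝒞, |(μ C).toReal - empFreq C x|}
        ≤ (k : ℝ≥0∞) * ENNReal.ofReal (1 / (n * δ ^ 2)) := by
    intro n hn
    have hsub : {x : Fin n → Ω | ε ≤ ⨆ C ∈ 𝒞, |(μ C).toReal - empFreq C x|}
        ⊆ ⋃ ω ∈ F, {x | δ ≤ |(μ {ω}).toReal - empFreq {ω} x|} := by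
      intro x hx
      by_contra hnot
      simp only [Set.mem_iUnion, Set.mem_setOf_eq, not_exists, not_le] at hnot
      have hall : ∀ ω ∈ F, |(μ {ω}).toReal - empFreq {ω} x| ≤ δ :=
        fun ω hω => (hnot ω hω).le
      have hkey : ∀ C : Set Ω, |(μ C).toReal - empFreq C x| ≤ ε / 2 := fun C =>
        (key_bound (μ := μ) hn F x hall hη C).trans hbound
      have hsup : (⨆ C ∈ 𝒞, |(μ C).toReal - empFreq C x|) ≤ ε / 2 :=
        Real.iSup_le (fun C => Real.iSup_le (fun _ => hkey C) (by linarith))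
          (by linarith)
      have := hx
      simp only [Set.mem_setOf_eq] at this
      linarith
    calc prodMeas μ n {x | ε ≤ ⨆ C ∈ 𝒞, |(μ C).toReal - empFreq C x|}
        ≤ prodMeas μ n (⋃ ω ∈ F, {x | δ ≤ |(μ {ω}).toReal - empFreq {ω} x|}) :=
          measure_mono hsub
      _ ≤ ∑ ω ∈ F, prodMeas μ n {x | δ ≤ |(μ {ω}).toReal - empFreq {ω} x|} :=
          measure_biUnion_finset_le F _
      _ ≤ ∑ _ω ∈ F, ENNReal.ofReal (1 / (n * δ ^ 2)) :=
          Finset.sum_le_sum fun ω _ =>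
            concentration (measurableSet_singleton ω) hn hδpos
      _ = (k : ℝ≥0∞) * ENNReal.ofReal (1 / (n * δ ^ 2)) := by
          rw [Finset.sum_const, nsmul_eq_mul, hk]
  have hg : Tendsto (fun n : ℕ => (k : ℝ≥0∞) * ENNReal.ofReal (1 / (n * δ ^ 2)))
      atTop (nhds 0) := by
    have hreal : Tendsto (fun n : ℕ => 1 / ((n : ℝ) * δ ^ 2)) atTop (nhds 0) := by
      have hbase : Tendsto (fun n : ℕ => 1 / (n : ℝ)) atTop (nhds 0) :=
        tendsto_one_div_atTop_nhds_zero_nat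
      have := hbase.const_mul (1 / δ ^ 2)
      rw [mul_zero] at this
      refine this.congr fun n => ?_
      field_simp
    have hof : Tendsto (fun n : ℕ => ENNReal.ofReal (1 / ((n : ℝ) * δ ^ 2)))
        atTop (nhds 0) := by
      have := ENNReal.tendsto_ofReal (f := atTop) hreal
      rwa [ENNReal.ofReal_zero] at this
    have := ENNReal.Tendsto.const_mul hof
      (Or.inr (ENNReal.natCast_ne_top k))
    rwa [mul_zero] at this
  refine tendsto_of_tendsto_of_tendsto_of_le_of_le' tendsto_const_nhds hg
    (Eventually.of_forall fun n => zero_le) ?_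
  filter_upwards [eventually_ge_atTop 1] with n hn
  exact hconc n hn
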